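/- For any coprime integers p > q > 1 and any number-like configuration x over {0,...,pq-1}, and any i ∈ Z, the width-1 column trace tr_{Mul_{p/q,pq}, i}(x) = (Mul_{p/q,pq}^t(x)[i])_{t∈N} is not eventually periodic. (This follows from rapid left expansivity of Mul_{p/q,pq}: it is left expansive with dimensions (1,1,1) and left spreading with speed log_{pq}(p/q) < 1.) -/

import Mathlib

/-- The `i`-th digit of `ξ` in base `n`: `⌊ξ / n^i⌋ mod n`. -/
noncomputable def digitN (n : ℕ) (ξ : ℝ) (i : ℤ) : ℕ :=
  (⌊ξ / (n : ℝ) ^ i⌋ % (n : ℤ)).toNat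

/-- The configuration of base-`n` digits of `ξ`: `configN n ξ [i] = ξ_{-i-1}`. -/
noncomputable def configN (n : ℕ) (hn : 0 < n) (ξ : ℝ) : ℤ → Fin n :=
  fun i => ⟨digitN n ξ (-i - 1) % n, Nat.mod_lt _ hn⟩

/-- The real number represented by a configuration: `Σ_i x[-i] n^{i-1} = Σ_i x[i] n^{-i-1}`. -/
noncomputable def realN (n : ℕ) {m : ℕ} (x : ℤ → Fin m) : ℝ :=
  ∑' i : ℤ, ((x i : ℕ) : ℝ) * (n : ℝ) ^ (-i - 1)

/-- A configuration over `{0,...,m-1}` is number-like. -/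
def NumberLikeF {m : ℕ} (x : ℤ → Fin m) : Prop :=
  (∃ i, (x i : ℕ) ≠ 0) ∧ ∃ N : ℤ, ∀ i < N, (x i : ℕ) = 0

/-- The local rule of multiplication by `p` in base `pq`: with `a = a₁q + a₀`,
`b = b₁q + b₀`, it maps `(a, b) ↦ a₀ p + b₁` (reduction mod `pq` never takes effect). -/
def mulRule (p q : ℕ) (hn : 0 < p * q) (a b : Fin (p * q)) : Fin (p * q) :=
  ⟨((a : ℕ) % q * p + (b : ℕ) / q) % (p * q), Nat.mod_lt _ hn⟩

/-- The multiplication automaton `Mul_{p,pq}`, a CA with `(0,1)` local rule `mulRule`. -/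
def mulP (p q : ℕ) (hn : 0 < p * q) (x : ℤ → Fin (p * q)) : ℤ → Fin (p * q) :=
  fun i => mulRule p q hn (x i) (x (i + 1))

/-- The fractional multiplication automaton `Mul_{p/q,pq} = σ⁻¹ ∘ Mul_{p,pq} ∘ Mul_{p,pq}`. -/
def mulFrac (p q : ℕ) (hn : 0 < p * q) (x : ℤ → Fin (p * q)) : ℤ → Fin (p * q) :=
  fun i => mulP p q hn (mulP p q hn x) (i - 1)

/-- A one-sided sequence is eventually `p'`-periodic for some `p' ≥ 1`. -/
def EvPeriodicSeq {B : Type*} (y : ℕ → B) : Prop :=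
  ∃ p : ℕ, 1 ≤ p ∧ ∃ c : ℕ, ∀ t, c ≤ t → y (t + p) = y t

/-- Partial sum of digits of `y` at positions `lo, lo+1, ..., lo+L-1`, most
significant at the bottom (`lo`). -/
def PsAux (nn : ℕ) (y : ℤ → Fin nn) (lo : ℤ) : ℕ → ℤ
  | 0 => 0
  | L + 1 => (nn : ℤ) * PsAux nn y lo L + ((y (lo + (L : ℤ)) : ℕ) : ℤ)

lemma PsAux_nonneg (nn : ℕ) (y : ℤ → Fin nn) (lo : ℤ) : ∀ L, 0 ≤ PsAux nn y lo L
  | 0 => le_refl 0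
  | L + 1 => by
      have ih := PsAux_nonneg nn y lo L
      simp only [PsAux]
      have h1 : (0:ℤ) ≤ (nn:ℤ) * PsAux nn y lo L := mul_nonneg (by positivity) ih
      have h2 : (0:ℤ) ≤ ((y (lo + (L:ℤ)) : ℕ) : ℤ) := by positivity
      linarith

lemma PsAux_single (nn : ℕ) (hnn : 0 < nn) (y : ℤ → Fin nn) (lo : ℤ) :
    ∀ (L k : ℕ), k < L →
      ((nn:ℤ))^(L - 1 - k) * ((y (lo + (k:ℤ)) : ℕ) : ℤ) ≤ PsAux nn y lo L := by
  intro L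
  induction L with
  | zero => intro k hk; omega
  | succ L ih =>
    intro k hk
    rcases Nat.lt_succ_iff_lt_or_eq.mp hk with hk' | rfl
    · have h1 := ih k hk'
      have hexp : L + 1 - 1 - k = (L - 1 - k) + 1 := by omega
      rw [hexp]
      simp only [PsAux]
      have hv : (0:ℤ) ≤ ((y (lo + (L:ℤ)) : ℕ) : ℤ) := by positivity
      have h2 : (nn:ℤ) * ((nn:ℤ)^(L-1-k) * ((y (lo + (k:ℤ)) : ℕ) : ℤ)) ≤ (nn:ℤ) * PsAux nn y lo L := by
        apply mul_le_mul_of_nonneg_left h1 (by positivity)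
      calc (nn:ℤ)^(L-1-k+1) * ((y (lo + (k:ℤ)) : ℕ) : ℤ)
          = (nn:ℤ) * ((nn:ℤ)^(L-1-k) * ((y (lo + (k:ℤ)) : ℕ) : ℤ)) := by ring
        _ ≤ (nn:ℤ) * PsAux nn y lo L := h2
        _ ≤ PsAux nn y lo (L+1) := by simp only [PsAux]; linarith
    · have hexp : k + 1 - 1 - k = 0 := by omega
      rw [hexp]
      simp only [PsAux]
      have h1 : (0:ℤ) ≤ (nn:ℤ) * PsAux nn y lo k := mul_nonneg (by positivity) (PsAux_nonneg nn y lo k)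
      linarith

lemma PsAux_split (nn : ℕ) (hnn : 0 < nn) (y : ℤ → Fin nn) (lo : ℤ) :
    ∀ (K L : ℕ), PsAux nn y lo (L + K) ≤ (nn:ℤ)^K * PsAux nn y lo L + ((nn:ℤ)^K - 1) := by
  intro K
  induction K with
  | zero => intro L; simp
  | succ K ih =>
    intro L
    have h1 : L + (K + 1) = (L + K) + 1 := by omega
    rw [h1]
    simp only [PsAux]
    have h2 := ih L
    have hv : ((y (lo + ((L+K : ℕ):ℤ)) : ℕ) : ℤ) ≤ (nn:ℤ) - 1 := by
      have := Fin.is_lt (y (lo + ((L+K : ℕ):ℤ)))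
      omega
    have h3 : (nn:ℤ) * PsAux nn y lo (L+K) ≤ (nn:ℤ) * ((nn:ℤ)^K * PsAux nn y lo L + ((nn:ℤ)^K - 1)) :=
      mul_le_mul_of_nonneg_left h2 (by positivity)
    have hnn1 : (1:ℤ) ≤ (nn:ℤ) := by exact_mod_cast hnn
    have hr : (nn:ℤ) * ((nn:ℤ)^K * PsAux nn y lo L + ((nn:ℤ)^K - 1)) + ((nn:ℤ) - 1)
        = (nn:ℤ)^(K+1) * PsAux nn y lo L + ((nn:ℤ)^(K+1) - 1) := by ring
    linarith [h3, hv, hr]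

lemma PsAux_pad (nn : ℕ) (y : ℤ → Fin nn) (lo : ℤ) (h : ((y (lo - 1) : ℕ)) = 0) :
    ∀ L, PsAux nn y (lo - 1) (L + 1) = PsAux nn y lo L := by
  intro L
  induction L with
  | zero => simp [PsAux, h]
  | succ L ih =>
    show (nn:ℤ) * PsAux nn y (lo-1) (L+1) + ((y (lo - 1 + ((L+1:ℕ):ℤ)) : ℕ) : ℤ)
      = (nn:ℤ) * PsAux nn y lo L + ((y (lo + (L:ℤ)) : ℕ) : ℤ)
    rw [ih, show lo - 1 + ((L+1:ℕ):ℤ) = lo + (L:ℤ) by push_cast; ring]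

section CArules
variable (p q : ℕ) (hn : 0 < p * q)

lemma mulP_val_eq (y : ℤ → Fin (p*q)) (j : ℤ) :
    ((mulP p q hn y) j : ℕ) = ((y j : ℕ) % q * p + ((y (j+1) : ℕ)) / q) % (p * q) := rfl

lemma mulP_val_lt (hq : 0 < q) (y : ℤ → Fin (p*q)) (j : ℤ) :
    (y j : ℕ) % q * p + ((y (j+1) : ℕ)) / q < p * q := by
  have h1 : (y j : ℕ) % q ≤ q - 1 := by
    have := Nat.mod_lt (y j : ℕ) hq; omega
  have h2 : ((y (j+1) : ℕ)) / q < p := by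
    rw [Nat.div_lt_iff_lt_mul hq]
    exact Fin.is_lt (y (j+1))
  have h3 : (y j : ℕ) % q * p ≤ (q-1) * p := Nat.mul_le_mul_right _ h1
  have h4 : (q - 1) * p + p = q * p := by
    cases q with
    | zero => omega
    | succ q' => simp only [Nat.succ_sub_one]; ring
  have h5 : q * p = p * q := Nat.mul_comm _ _
  omega

lemma mulP_val (hq : 0 < q) (y : ℤ → Fin (p*q)) (j : ℤ) :
    ((mulP p q hn y) j : ℕ) = (y j : ℕ) % q * p + ((y (j+1) : ℕ)) / q := by
  rw [mulP_val_eq]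
  exact Nat.mod_eq_of_lt (mulP_val_lt p q hq y j)

lemma mulP_val_zero (hq : 0 < q) (y : ℤ → Fin (p*q)) (j : ℤ)
    (h1 : (y j : ℕ) = 0) (h2 : (y (j+1) : ℕ) = 0) :
    ((mulP p q hn y) j : ℕ) = 0 := by
  rw [mulP_val p q hn hq, h1, h2]
  simp

/-- The key digit-wise multiplication-by-`p` identity for partial sums. -/
lemma mulP_PsAux (hq : 0 < q) (y : ℤ → Fin (p*q)) (lo : ℤ) (h0 : ((y lo : ℕ)) = 0) :
    ∀ L, PsAux (p*q) (mulP p q hn y) lo L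
      = (p:ℤ) * PsAux (p*q) y lo L + (((y (lo + (L:ℤ)) : ℕ) / q : ℕ) : ℤ) := by
  intro L
  induction L with
  | zero => simp [PsAux, h0]
  | succ L ih =>
    have hpos : lo + ((L+1:ℕ):ℤ) = (lo + (L:ℤ)) + 1 := by push_cast; ring
    show ((p*q : ℕ):ℤ) * PsAux (p*q) (mulP p q hn y) lo L + (((mulP p q hn y) (lo + (L:ℤ)) : ℕ) : ℤ)
      = (p:ℤ) * (((p*q : ℕ):ℤ) * PsAux (p*q) y lo L + ((y (lo + (L:ℤ)) : ℕ) : ℤ))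
        + (((y (lo + ((L+1:ℕ):ℤ)) : ℕ) / q : ℕ) : ℤ)
    rw [ih, mulP_val p q hn hq, hpos]
    have hdm : q * ((y (lo + (L:ℤ)) : ℕ) / q) + (y (lo + (L:ℤ)) : ℕ) % q = (y (lo + (L:ℤ)) : ℕ) :=
      Nat.div_add_mod _ q
    have hdmz : (q:ℤ) * (((y (lo + (L:ℤ)) : ℕ) / q : ℕ) : ℤ) + (((y (lo + (L:ℤ)) : ℕ) % q : ℕ) : ℤ)
        = ((y (lo + (L:ℤ)) : ℕ) : ℤ) := by exact_mod_cast hdm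
    push_cast
    push_cast at hdmz
    linear_combination (p:ℤ) * hdmz

lemma PsAux_shift (y : ℤ → Fin (p*q)) :
    ∀ (L : ℕ) (lo : ℤ), PsAux (p*q) (mulFrac p q hn y) lo L
      = PsAux (p*q) (mulP p q hn (mulP p q hn y)) (lo - 1) L := by
  intro L
  induction L with
  | zero => intro lo; rfl
  | succ L ih =>
    intro lo
    show ((p*q : ℕ):ℤ) * PsAux (p*q) (mulFrac p q hn y) lo L + (((mulFrac p q hn y) (lo + (L:ℤ)) : ℕ) : ℤ)
      = ((p*q : ℕ):ℤ) * PsAux (p*q) (mulP p q hn (mulP p q hn y)) (lo-1) L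
        + (((mulP p q hn (mulP p q hn y)) (lo - 1 + (L:ℤ)) : ℕ) : ℤ)
    rw [ih]
    have he : (mulFrac p q hn y) (lo + (L:ℤ)) = (mulP p q hn (mulP p q hn y)) (lo + (L:ℤ) - 1) := rfl
    rw [he, show lo + (L:ℤ) - 1 = lo - 1 + (L:ℤ) by ring]

/-- The main recurrence: one step of `mulFrac` on partial sums ending at column
`lo + L`, provided all digits strictly below `lo` vanish. -/
lemma rec_main (hq : 0 < q) (y : ℤ → Fin (p*q)) (lo : ℤ) (L : ℕ)
    (hz : ∀ j : ℤ, j < lo → ((y j : ℕ)) = 0) :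
    (q:ℤ) * PsAux (p*q) (mulFrac p q hn y) (lo - 1) (L+2)
      = (p:ℤ) * PsAux (p*q) y lo (L+1)
        + ((q:ℤ) * ((((mulP p q hn y) (lo + (L:ℤ)) : ℕ) / q : ℕ) : ℤ)
          - (p:ℤ) * (((y (lo + (L:ℤ)) : ℕ) % q : ℕ) : ℤ)) := by
  have hz2 : ∀ j : ℤ, j < lo - 1 → (((mulP p q hn y) j : ℕ)) = 0 := by
    intro j hj
    exact mulP_val_zero p q hn hq y j (hz j (by omega)) (hz (j+1) (by omega))
  -- shift
  rw [PsAux_shift p q hn y (L+2) (lo-1), show lo - 1 - 1 = lo - 2 by ring]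
  -- first application of mulP_PsAux (outer mulP)
  have e1 := mulP_PsAux p q hn hq (mulP p q hn y) (lo - 2)
    (hz2 (lo-2) (by omega)) (L+2)
  -- second application (inner)
  have e2 := mulP_PsAux p q hn hq y (lo - 2) (hz (lo-2) (by omega)) (L+2)
  -- pad lemma twice
  have e3 : PsAux (p*q) y (lo - 2) (L+2) = PsAux (p*q) y lo L := by
    have p1 : PsAux (p*q) y (lo - 1 - 1) (L+1+1) = PsAux (p*q) y (lo-1) (L+1) :=
      PsAux_pad (p*q) y (lo-1) (hz (lo-1-1) (by omega)) (L+1)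
    have p2 : PsAux (p*q) y (lo - 1) (L+1) = PsAux (p*q) y lo L :=
      PsAux_pad (p*q) y lo (hz (lo-1) (by omega)) L
    rw [show lo - 2 = lo - 1 - 1 by ring, show L + 2 = L + 1 + 1 by ring, p1, p2]
  have hpos : lo - 2 + ((L+2:ℕ):ℤ) = lo + (L:ℤ) := by push_cast; ring
  rw [hpos] at e1 e2
  rw [e1, e2, e3]
  -- unfold PsAux y lo (L+1)
  have e4 : PsAux (p*q) y lo (L+1) = ((p*q:ℕ):ℤ) * PsAux (p*q) y lo L + ((y (lo + (L:ℤ)) : ℕ) : ℤ) := rfl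
  rw [e4]
  have hdm : q * ((y (lo + (L:ℤ)) : ℕ) / q) + (y (lo + (L:ℤ)) : ℕ) % q = (y (lo + (L:ℤ)) : ℕ) :=
    Nat.div_add_mod _ q
  have hdmz : (q:ℤ) * (((y (lo + (L:ℤ)) : ℕ) / q : ℕ) : ℤ) + (((y (lo + (L:ℤ)) : ℕ) % q : ℕ) : ℤ)
      = ((y (lo + (L:ℤ)) : ℕ) : ℤ) := by exact_mod_cast hdm
  rw [Nat.cast_mul]
  linear_combination (p:ℤ) * hdmz

end CArules

lemma helper_w0 (p q w A B : ℤ) (hp1 : 1 ≤ p) (hq1 : 1 ≤ q)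
    (hA0 : 0 ≤ A) (hA : A ≤ p - 1) (hB0 : 0 ≤ B) (hB : B ≤ p - 1)
    (hw : q * (A - B) = p * q * w) : w = 0 := by
  have hpq0 : (0:ℤ) < p * q := by positivity
  have hub : p * q * w < p * q := by nlinarith
  have hlb : -(p * q) < p * q * w := by nlinarith
  by_contra h0
  rcases lt_or_gt_of_ne h0 with h | h
  · nlinarith
  · nlinarith

/-- For coprime `p > q > 1`, any number-like configuration `x` over `{0,...,pq-1}`
and any `i ∈ ℤ`, the width-1 column trace `t ↦ Mul_{p/q,pq}^t(x)[i]` is not eventually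
periodic. -/

theorem stmt_19 (p q : ℕ) (hq : 1 < q) (hpq : q < p) (hco : Nat.Coprime p q)
    (hn : 0 < p * q) (x : ℤ → Fin (p * q)) (hx : NumberLikeF x) (i : ℤ) :
    ¬ EvPeriodicSeq (fun t : ℕ => (mulFrac p q hn)^[t] x i) := by
  intro hEv
  obtain ⟨P, hP1, c, hper⟩ := hEv
  obtain ⟨⟨i₀, hi₀⟩, ⟨N, hN⟩⟩ := hx
  have hq0 : 0 < q := by omega
  have hp0 : 0 < p := by omega
  have hnn2 : (2:ℕ) ≤ p * q := by nlinarith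
  set y : ℕ → ℤ → Fin (p*q) := fun t => (mulFrac p q hn)^[t] x with hydef
  have hperi : ∀ t, c ≤ t → (y (t+P)) i = (y t) i := fun t ht => hper t ht
  clear_value y
  set M : ℤ := min N i with hMdef
  have hMi : M ≤ i := min_le_right N i
  have hMN : M ≤ N := min_le_left N i
  have hNi₀ : N ≤ i₀ := by
    by_contra h
    exact hi₀ (hN i₀ (by omega))
  -- zero digits spread left at speed one
  have hyz : ∀ (t : ℕ) (j : ℤ), j < M - t → ((y t) j : ℕ) = 0 := by
    intro t
    induction t with
    | zero =>
      intro j hj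
      have : ((y 0) j) = x j := by rw [hydef]; simp
      rw [this]
      exact hN j (by omega)
    | succ t ih =>
      intro j hj
      have hz1 : ∀ j' : ℤ, j' < M - t - 1 → ((mulP p q hn (y t)) j' : ℕ) = 0 := by
        intro j' hj'
        exact mulP_val_zero p q hn hq0 (y t) j' (ih j' (by omega)) (ih (j'+1) (by omega))
      have hy1 : y (t+1) = mulFrac p q hn (y t) := by
        rw [hydef]; simp [Function.iterate_succ_apply']
      rw [hy1]
      have he : ((mulFrac p q hn (y t)) j : ℕ)
          = ((mulP p q hn (mulP p q hn (y t))) (j-1) : ℕ) := rfl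
      rw [he]
      refine mulP_val_zero p q hn hq0 _ (j-1) (hz1 (j-1) (by omega)) ?_
      rw [show j - 1 + 1 = j by ring]
      exact hz1 j (by omega)
  -- column positions
  set i' : ℤ := max i i₀ + 2 with hi'def
  have hii' : i ≤ i' := by have := le_max_left i i₀; omega
  have hi₀i' : i₀ + 2 ≤ i' := by have := le_max_right i i₀; omega
  set K : ℕ := (i' - i).toNat with hKdef
  have hKc : (K:ℤ) = i' - i := by omega
  -- the moving-window partial sums
  set mm : ℤ → ℕ → ℤ :=
    fun col t => PsAux (p*q) (y t) (M - 2 - (t:ℤ)) ((col + 2 + (t:ℤ) - M).toNat + 1) with hmm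
  clear_value mm
  have hmsucc : ∀ col : ℤ, M ≤ col → ∀ t : ℕ,
      mm col (t+1) = PsAux (p*q) (mulFrac p q hn (y t)) ((M - 2 - (t:ℤ)) - 1)
        (((col + 2 + (t:ℤ) - M).toNat) + 2) := by
    intro col hcol t
    have hy1 : y (t+1) = mulFrac p q hn (y t) := by
      rw [hydef]; simp [Function.iterate_succ_apply']
    simp only [hmm]
    rw [hy1]
    rw [show M - 2 - ((t+1 : ℕ):ℤ) = (M - 2 - (t:ℤ)) - 1 by push_cast; ring]
    rw [show ((col + 2 + ((t+1:ℕ):ℤ) - M).toNat + 1) = ((col + 2 + (t:ℤ) - M).toNat) + 2 by omega]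
  -- the main recurrence
  have hrec : ∀ col : ℤ, M ≤ col → ∀ t : ℕ,
      (q:ℤ) * mm col (t+1) = (p:ℤ) * mm col t
        + ((q:ℤ) * ((((mulP p q hn (y t)) col : ℕ) / q : ℕ) : ℤ)
          - (p:ℤ) * ((((y t) col : ℕ) % q : ℕ) : ℤ)) := by
    intro col hcol t
    rw [hmsucc col hcol t]
    have h1 := rec_main p q hn hq0 (y t) (M - 2 - (t:ℤ)) ((col + 2 + (t:ℤ) - M).toNat)
      (fun j hj => hyz t j (by omega))
    rw [show (M - 2 - (t:ℤ)) + (((col + 2 + (t:ℤ) - M).toNat : ℕ) : ℤ) = col by omega] at h1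
    rw [h1, hmm]
  -- divisibility of partial sums minus the trace digit
  have hmod : ∀ col : ℤ, M ≤ col → ∀ t : ℕ,
      ((p*q : ℕ):ℤ) ∣ (mm col t - (((y t) col : ℕ) : ℤ)) := by
    intro col hcol t
    have h1 : mm col t = ((p*q:ℕ):ℤ) * PsAux (p*q) (y t) (M - 2 - (t:ℤ)) ((col + 2 + (t:ℤ) - M).toNat)
        + (((y t) ((M - 2 - (t:ℤ)) + (((col + 2 + (t:ℤ) - M).toNat : ℕ):ℤ)) : ℕ) : ℤ) := by
      simp only [hmm]; rfl
    rw [show (M - 2 - (t:ℤ)) + (((col + 2 + (t:ℤ) - M).toNat : ℕ) : ℤ) = col by omega] at h1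
    exact ⟨PsAux (p*q) (y t) (M - 2 - (t:ℤ)) ((col + 2 + (t:ℤ) - M).toNat), by rw [h1]; ring⟩
  -- bounds on the correction terms
  have hvb : ∀ (t : ℕ) (col : ℤ), (((mulP p q hn (y t)) col : ℕ) / q) < p := by
    intro t col
    rw [Nat.div_lt_iff_lt_mul hq0]
    exact Fin.is_lt _
  have hmdb : ∀ (t : ℕ) (col : ℤ), (((y t) col : ℕ) % q) < q := fun t col => Nat.mod_lt _ hq0
  -- nonnegativity of mm
  have hmmpos : ∀ (col : ℤ) (t : ℕ), 0 ≤ mm col t := by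
    intro col t
    simp only [hmm]
    exact PsAux_nonneg _ _ _ _
  -- growth at column i'
  have hstep' : ∀ t : ℕ, ((p*q:ℕ):ℤ)^2 ≤ mm i' t → mm i' t + 1 ≤ mm i' (t+1) := by
    intro t hX
    have h1 := hrec i' (by omega) t
    have h2 : (0:ℤ) ≤ ((((mulP p q hn (y t)) i' : ℕ) / q : ℕ) : ℤ) := by positivity
    have h3 : ((((y t) i' : ℕ) % q : ℕ) : ℤ) ≤ (q:ℤ) - 1 := by
      have := hmdb t i'; omega
    have h4 : (q:ℤ) + 1 ≤ (p:ℤ) := by exact_mod_cast hpq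
    have h5 : (1:ℤ) ≤ (q:ℤ) := by exact_mod_cast hq.le
    have hXpos : (0:ℤ) ≤ mm i' t := hmmpos i' t
    have hcast : ((p*q:ℕ):ℤ) = (p:ℤ) * (q:ℤ) := by push_cast; ring
    rw [hcast] at hX
    have key : (q:ℤ) * (mm i' t + 1) ≤ (q:ℤ) * mm i' (t+1) := by nlinarith
    exact le_of_mul_le_mul_left key (by omega)
  have hgrow : ∀ t : ℕ, ((p*q:ℕ):ℤ)^2 + t ≤ mm i' t := by
    intro t
    induction t with
    | zero =>
      have hy0 : y 0 = x := by rw [hydef]; simp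
      have hbase : mm i' 0 = PsAux (p*q) x (M - 2 - ((0:ℕ):ℤ)) ((i' + 2 + ((0:ℕ):ℤ) - M).toNat + 1) := by
        simp only [hmm, hy0]
      set k : ℕ := (i₀ - (M - 2 - ((0:ℕ):ℤ))).toNat with hkdef
      have hk : k < (i' + 2 + ((0:ℕ):ℤ) - M).toNat + 1 := by omega
      have hsingle := PsAux_single (p*q) hn x (M - 2 - ((0:ℕ):ℤ))
        ((i' + 2 + ((0:ℕ):ℤ) - M).toNat + 1) k hk
      rw [show (M - 2 - ((0:ℕ):ℤ)) + (k:ℤ) = i₀ by omega] at hsingle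
      have hval : (1:ℤ) ≤ ((x i₀ : ℕ) : ℤ) := by
        have : (x i₀ : ℕ) ≠ 0 := hi₀
        omega
      have hexp : 2 ≤ (i' + 2 + ((0:ℕ):ℤ) - M).toNat + 1 - 1 - k := by omega
      have hnn1 : (1:ℤ) ≤ ((p*q:ℕ):ℤ) := by exact_mod_cast (by omega : 1 ≤ p*q)
      have hpow : ((p*q:ℕ):ℤ)^2 ≤ ((p*q:ℕ):ℤ)^((i' + 2 + ((0:ℕ):ℤ) - M).toNat + 1 - 1 - k) :=
        pow_le_pow_right₀ hnn1 hexp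
      have : ((p*q:ℕ):ℤ)^2 ≤ mm i' 0 := by
        rw [hbase]
        calc ((p*q:ℕ):ℤ)^2 = ((p*q:ℕ):ℤ)^2 * 1 := by ring
          _ ≤ ((p*q:ℕ):ℤ)^((i' + 2 + ((0:ℕ):ℤ) - M).toNat + 1 - 1 - k) * ((x i₀ : ℕ) : ℤ) := by
              apply mul_le_mul hpow hval (by norm_num) (by positivity)
          _ ≤ _ := hsingle
      simpa using this
    | succ t ih =>
      have h1 := hstep' t (by linarith [Int.natCast_nonneg t])
      push_cast
      push_cast at ih
      linarith
  -- comparison between columns i' and i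
  have hsplit : ∀ t : ℕ, mm i' t ≤ ((p*q:ℕ):ℤ)^K * mm i t + (((p*q:ℕ):ℤ)^K - 1) := by
    intro t
    have h1 := PsAux_split (p*q) hn (y t) (M - 2 - (t:ℤ)) K ((i + 2 + (t:ℤ) - M).toNat + 1)
    have h2 : mm i' t = PsAux (p*q) (y t) (M - 2 - (t:ℤ)) (((i + 2 + (t:ℤ) - M).toNat + 1) + K) := by
      simp only [hmm]
      rw [show ((i' + 2 + (t:ℤ) - M).toNat + 1) = ((i + 2 + (t:ℤ) - M).toNat + 1) + K by omega]
    rw [h2]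
    simp only [hmm]
    exact h1
  -- the trace is periodic: differences are divisible and satisfy exact scaling
  have hdvdD : ∀ t : ℕ, c ≤ t → ((p*q:ℕ):ℤ) ∣ (mm i (t+P) - mm i t) := by
    intro t ht
    obtain ⟨a, ha⟩ := hmod i hMi (t+P)
    obtain ⟨b, hb⟩ := hmod i hMi t
    have hdd : (((y (t+P)) i : ℕ):ℤ) = (((y t) i : ℕ):ℤ) := by rw [hperi t ht]
    exact ⟨a - b, by rw [mul_sub, ← ha, ← hb]; linarith⟩
  have hDstep : ∀ t : ℕ, c ≤ t →
      (q:ℤ) * (mm i (t+1+P) - mm i (t+1)) = (p:ℤ) * (mm i (t+P) - mm i t) := by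
    intro t ht
    have h1 := hrec i hMi t
    have h2 := hrec i hMi (t+P)
    set v1 : ℤ := ((((mulP p q hn (y (t+P))) i : ℕ) / q : ℕ) : ℤ) with hv1
    set v2 : ℤ := ((((mulP p q hn (y t)) i : ℕ) / q : ℕ) : ℤ) with hv2
    clear_value v1 v2
    have hmd : ((((y (t+P)) i : ℕ) % q : ℕ) : ℤ) = ((((y t) i : ℕ) % q : ℕ) : ℤ) := by
      rw [hperi t ht]
    rw [show t+1+P = t+P+1 by omega]
    have hr : (q:ℤ) * (mm i (t+P+1) - mm i (t+1)) - (p:ℤ) * (mm i (t+P) - mm i t)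
        = (q:ℤ) * (v1 - v2) := by
      rw [mul_sub, mul_sub, h1, h2, hmd]; ring
    have hdvd : ((p*q:ℕ):ℤ) ∣ ((q:ℤ) * (mm i (t+P+1) - mm i (t+1)) - (p:ℤ) * (mm i (t+P) - mm i t)) := by
      apply dvd_sub
      · exact Dvd.dvd.mul_left (by rw [show t+P+1 = t+1+P by omega]; exact hdvdD (t+1) (by omega)) _
      · exact Dvd.dvd.mul_left (hdvdD t ht) _
    rw [hr] at hdvd
    obtain ⟨w, hw⟩ := hdvd
    have hb1 : v1 ≤ (p:ℤ) - 1 := by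
      have := hvb (t+P) i; rw [hv1]; omega
    have hb2 : (0:ℤ) ≤ v1 := by rw [hv1]; positivity
    have hb3 : v2 ≤ (p:ℤ) - 1 := by
      have := hvb t i; rw [hv2]; omega
    have hb4 : (0:ℤ) ≤ v2 := by rw [hv2]; positivity
    have hcast : ((p*q:ℕ):ℤ) = (p:ℤ) * (q:ℤ) := by push_cast; ring
    rw [hcast] at hw
    have hq1 : (1:ℤ) ≤ (q:ℤ) := by exact_mod_cast hq.le
    have hp1 : (1:ℤ) ≤ (p:ℤ) := by exact_mod_cast hp0
    have hw0 : w = 0 := helper_w0 (p:ℤ) (q:ℤ) w v1 v2 hp1 hq1 hb2 hb1 hb4 hb3 (by linarith [hw])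
    rw [hw0, mul_zero] at hw
    linarith [hr, hw]
  -- geometric identity forces the differences to vanish
  have hgeom : ∀ k : ℕ, (p:ℤ)^k * (mm i (c+P) - mm i c) = (q:ℤ)^k * (mm i (c+k+P) - mm i (c+k)) := by
    intro k
    induction k with
    | zero => simp
    | succ k ih =>
      have h1 := hDstep (c+k) (by omega)
      calc (p:ℤ)^(k+1) * (mm i (c+P) - mm i c)
          = (p:ℤ) * ((p:ℤ)^k * (mm i (c+P) - mm i c)) := by ring
        _ = (p:ℤ) * ((q:ℤ)^k * (mm i (c+k+P) - mm i (c+k))) := by rw [ih]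
        _ = (q:ℤ)^k * ((p:ℤ) * (mm i (c+k+P) - mm i (c+k))) := by ring
        _ = (q:ℤ)^k * ((q:ℤ) * (mm i (c+k+1+P) - mm i (c+k+1))) := by rw [← h1]
        _ = (q:ℤ)^(k+1) * (mm i (c+(k+1)+P) - mm i (c+(k+1))) := by
            rw [show c+(k+1) = c+k+1 by omega]; ring
  have hDc : mm i (c+P) - mm i c = 0 := by
    by_contra hne
    set a : ℕ := (mm i (c+P) - mm i c).natAbs with hadef
    have ha0 : a ≠ 0 := fun h => hne (Int.natAbs_eq_zero.mp h)
    set k : ℕ := a + 1 with hkdef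
    have h1 := hgeom k
    have h2 : p^k * a = q^k * (mm i (c+k+P) - mm i (c+k)).natAbs := by
      have h3 := congrArg Int.natAbs h1
      simpa [Int.natAbs_mul, Int.natAbs_pow] using h3
    have h3 : q^k ∣ a * p^k := ⟨(mm i (c+k+P) - mm i (c+k)).natAbs, by rw [Nat.mul_comm a (p^k), h2]⟩
    have h4 : q^k ∣ a := (Nat.Coprime.pow k k (Nat.Coprime.symm hco)).dvd_of_dvd_mul_right h3
    have h5 : q^k ≤ a := Nat.le_of_dvd (Nat.pos_of_ne_zero ha0) h4
    have h6 : a < 2^k := by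
      calc a < 2^a := Nat.lt_two_pow_self
        _ ≤ 2^k := Nat.pow_le_pow_right (by norm_num) (by omega)
    have h7 : (2:ℕ)^k ≤ q^k := Nat.pow_le_pow_left (by omega) k
    omega
  have hDall : ∀ k : ℕ, mm i (c+k+P) - mm i (c+k) = 0 := by
    intro k
    have h1 := hgeom k
    rw [hDc, mul_zero] at h1
    have hqk : ((q:ℤ))^k ≠ 0 := by positivity
    have := mul_eq_zero.mp h1.symm
    tauto
  have hmconst : ∀ k : ℕ, mm i (c + k*P) = mm i c := by
    intro k
    induction k with
    | zero => simp
    | succ k ih =>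
      have h1 := hDall (k*P)
      rw [show c + (k+1)*P = c + k*P + P by ring]
      omega
  -- final contradiction
  have hKZ0 : (0:ℤ) ≤ ((p*q:ℕ):ℤ)^K := by positivity
  set k₀ : ℕ := (((p*q:ℕ):ℤ)^K * mm i c + ((p*q:ℕ):ℤ)^K).toNat + 1 with hk₀def
  have h4 : ((p*q:ℕ):ℤ)^K * mm i c + ((p*q:ℕ):ℤ)^K < (k₀:ℤ) := by
    have := Int.self_le_toNat (((p*q:ℕ):ℤ)^K * mm i c + ((p*q:ℕ):ℤ)^K)
    rw [hk₀def]
    push_cast at this ⊢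
    omega
  have h3 : (k₀:ℤ) ≤ ((c + k₀*P : ℕ):ℤ) := by
    have : k₀ ≤ c + k₀ * P := by
      calc k₀ = k₀ * 1 := by ring
        _ ≤ k₀ * P := Nat.mul_le_mul_left _ hP1
        _ ≤ c + k₀ * P := Nat.le_add_left _ _
    exact_mod_cast this
  have h1 := hsplit (c + k₀*P)
  have h2 := hgrow (c + k₀*P)
  have hmT : mm i (c + k₀*P) = mm i c := hmconst k₀
  rw [hmT] at h1
  have hsq : (0:ℤ) ≤ ((p*q:ℕ):ℤ)^2 := by positivity
  linarith
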